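/- For each positive integer k, (s(k) − σ(k))/2 − 2·ε_1(k) = s(r(k)), where ε_1(k) is the first M-digit of k, σ(k) is the sum of the M-digits of k, and r(k) is the reduction of k (the integer whose M-digit list is the left-shift of that of k, with r(1) = r(2) = 0). -/

import Mathlib

/-- `Alist k` is the list `A_{k+1}`: `A_1 = [5]`, `A_{k+1} = A_k ++ A_k ++ [1]`. -/
def Alist : ℕ → List ℕ
  | 0 => [5]
  | k+1 => Alist k ++ Alist k ++ [1]

/-- `aseq n` is the `n`-th term (1-indexed) of the limit of the lists `A_k`;
`aseq 0 = 0` by convention. -/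
def aseq (n : ℕ) : ℕ := (Alist n).getD (n - 1) 0

/-- Partial sums: `s n = a_1 + ⋯ + a_n`, `s 0 = 0`. -/
def s (n : ℕ) : ℕ := ∑ i ∈ Finset.Icc 1 n, aseq i

/-- The largest `ℓ` with `2^ℓ - 1 ≤ n` (for `n ≥ 1`). -/
def maxM (n : ℕ) : ℕ := Nat.findGreatest (fun ℓ => 2 ^ ℓ - 1 ≤ n) n

/-- `Mdig n i` is the digit `ε_i` in the greedy M-expansion
`n = ε_1·M_1 + ⋯ + ε_ℓ·M_ℓ` (with `M_i = 2^i - 1`): repeatedly subtract the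
largest Mersenne number `M_ℓ ≤ n`, recording a digit `2` if the remainder
equals `M_ℓ` again. -/
def Mdig (n : ℕ) : ℕ → ℕ :=
  if h : n = 0 then fun _ => 0
  else
    let ℓ := maxM n
    let r := n - (2 ^ ℓ - 1)
    if r = 2 ^ ℓ - 1 then fun i => if i = ℓ then 2 else 0
    else fun i => (if i = ℓ then 1 else 0) + Mdig r i
termination_by n
decreasing_by
  have h1 : 1 ≤ maxM n :=
    Nat.le_findGreatest (Nat.one_le_iff_ne_zero.mpr h) (by simpa using Nat.one_le_iff_ne_zero.mpr h)
  have h2 : 2 ≤ 2 ^ maxM n := by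
    calc (2 : ℕ) = 2 ^ 1 := rfl
    _ ≤ 2 ^ maxM n := Nat.pow_le_pow_right (by norm_num) h1
  have h3 : 1 ≤ n := Nat.one_le_iff_ne_zero.mpr h
  omega

/-- Sum of the M-digits of `n` (all nonzero digits have index `≤ n`). -/
def sigmaM (n : ℕ) : ℕ := ∑ i ∈ Finset.Icc 1 n, Mdig n i

/-- The reduction `r(k) = ε_2·M_1 + ε_3·M_2 + ⋯`: the integer whose M-digit
list is the left shift of that of `k` (so `r 1 = r 2 = 0`). -/
def reduce (k : ℕ) : ℕ := ∑ i ∈ Finset.Icc 1 k, Mdig k (i + 1) * (2 ^ i - 1)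

/-! ### Auxiliary lemmas -/

lemma lt_two_pow' (t : ℕ) : t < 2 ^ t := Nat.lt_two_pow_self (n := t)

lemma Alist_length (k : ℕ) : (Alist k).length = 2 ^ (k + 1) - 1 := by
  induction k with
  | zero => rfl
  | succ k ih =>
    have h1 : 1 ≤ 2 ^ (k + 1) := Nat.one_le_two_pow
    have h2 : 2 ^ (k + 2) = 2 * 2 ^ (k + 1) := by ring
    simp [Alist, ih]
    omega

lemma Alist_prefix {k m : ℕ} (h : k ≤ m) : Alist k <+: Alist m := by
  induction m with
  | zero => simpa [Nat.le_zero.mp h] using List.prefix_rfl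
  | succ m ih =>
    rcases Nat.lt_or_ge k (m + 1) with h' | h'
    · refine (ih (by omega)).trans ?_
      show Alist m <+: Alist m ++ Alist m ++ [1]
      rw [List.append_assoc]
      exact List.prefix_append _ _
    · have : k = m + 1 := by omega
      simp [this]

lemma aseq_eq (m n : ℕ) (h : n - 1 < (Alist m).length) :
    aseq n = (Alist m).getD (n - 1) 0 := by
  unfold aseq
  rcases le_total m n with hmn | hnm
  · have hp := Alist_prefix hmn
    rw [List.getD_eq_getElem _ _ h, List.getD_eq_getElem _ _ (lt_of_lt_of_le h hp.length_le)]
    exact (hp.getElem h).symm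
  · have hn : n - 1 < (Alist n).length := by
      rw [Alist_length]
      have := lt_two_pow' (n + 1)
      omega
    have hp := Alist_prefix hnm
    rw [List.getD_eq_getElem _ _ hn, List.getD_eq_getElem _ _ h]
    exact (hp.getElem hn).symm ▸ rfl

lemma aseq_shift {t j : ℕ} (ht : 1 ≤ t) (h1 : 1 ≤ j) (h2 : j ≤ 2 ^ t - 1) :
    aseq (2 ^ t - 1 + j) = aseq j := by
  obtain ⟨u, rfl⟩ : ∃ u, t = u + 1 := ⟨t - 1, by omega⟩
  have hL : (Alist u).length = 2 ^ (u + 1) - 1 := Alist_length u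
  have hlen : (Alist (u + 1)).length = 2 ^ (u + 2) - 1 := Alist_length (u + 1)
  have h2p : 1 ≤ 2 ^ (u + 1) := Nat.one_le_two_pow
  have hpp : 2 ^ (u + 2) = 2 * 2 ^ (u + 1) := by ring
  have hi : 2 ^ (u + 1) - 1 + j - 1 < (Alist (u + 1)).length := by omega
  rw [aseq_eq (u + 1) _ hi, aseq_eq u j (by omega)]
  rw [List.getD_eq_getElem _ _ hi, List.getD_eq_getElem _ _ (by omega)]
  show (Alist u ++ Alist u ++ [1])[2 ^ (u + 1) - 1 + j - 1]'(by simp [hL]; omega) = _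
  rw [List.getElem_append_left (by simp [hL]; omega)]
  rw [List.getElem_append_right (by omega)]
  congr 1
  omega

lemma aseq_M (t : ℕ) : aseq (2 ^ (t + 2) - 1) = 1 := by
  have hL : (Alist t).length = 2 ^ (t + 1) - 1 := Alist_length t
  have hlen : (Alist (t + 1)).length = 2 ^ (t + 2) - 1 := Alist_length (t + 1)
  have h2p : 1 ≤ 2 ^ (t + 1) := Nat.one_le_two_pow
  have hpp : 2 ^ (t + 2) = 2 * 2 ^ (t + 1) := by ring
  have hi : 2 ^ (t + 2) - 1 - 1 < (Alist (t + 1)).length := by omega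
  rw [aseq_eq (t + 1) _ hi, List.getD_eq_getElem _ _ hi]
  show (Alist t ++ Alist t ++ [1])[2 ^ (t + 2) - 1 - 1]'(by simp [hL]; omega) = _
  rw [List.getElem_append_right (by simp [hL]; omega)]
  simp

lemma s_zero : s 0 = 0 := by simp [s]

lemma s_succ (n : ℕ) : s (n + 1) = s n + aseq (n + 1) := by
  unfold s
  rw [← Finset.sum_Icc_succ_top (by omega)]

lemma s_one : s 1 = 5 := by
  have h := s_succ 0
  rw [s_zero] at h
  rw [h]
  rfl

lemma s_split {t x : ℕ} (ht : 1 ≤ t) (hx : x ≤ 2 ^ t - 1) :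
    s (2 ^ t - 1 + x) = s (2 ^ t - 1) + s x := by
  induction x with
  | zero => simp [s_zero]
  | succ x ih =>
    have h := ih (by omega)
    have he : 2 ^ t - 1 + (x + 1) = (2 ^ t - 1 + x) + 1 := by omega
    rw [he, s_succ, h, show 2 ^ t - 1 + x + 1 = 2 ^ t - 1 + (x + 1) from by omega,
      aseq_shift ht (by omega) hx, s_succ]
    omega

lemma s_M (t : ℕ) (ht : 1 ≤ t) : s (2 ^ t - 1) = 3 * 2 ^ t - 1 := by
  induction t with
  | zero => omega
  | succ t ih =>
    rcases Nat.eq_zero_or_pos t with h0 | hpos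
    · subst h0; simpa using s_one
    · obtain ⟨u, rfl⟩ : ∃ u, t = u + 1 := ⟨t - 1, by omega⟩
      have h2p : 1 ≤ 2 ^ (u + 1) := Nat.one_le_two_pow
      have hB : 2 ^ (u + 2) = 2 * 2 ^ (u + 1) := by ring
      have h1 : 2 ^ (u + 2) - 1 = (2 ^ (u + 1) - 1 + (2 ^ (u + 1) - 1)) + 1 := by omega
      rw [h1, s_succ, s_split hpos le_rfl, ih hpos]
      rw [show 2 ^ (u + 1) - 1 + (2 ^ (u + 1) - 1) + 1 = 2 ^ (u + 2) - 1 by omega, aseq_M u]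
      omega

/-! ### maxM lemmas -/

lemma maxM_le (n : ℕ) : maxM n ≤ n := Nat.findGreatest_le n

lemma maxM_mono {m n : ℕ} (h : m ≤ n) : maxM m ≤ maxM n :=
  Nat.findGreatest_mono (fun _ hl => le_trans hl h) h

lemma maxM_spec (n : ℕ) (hn : 1 ≤ n) :
    1 ≤ maxM n ∧ 2 ^ maxM n - 1 ≤ n ∧ n < 2 ^ (maxM n + 1) - 1 := by
  have h1 : 1 ≤ maxM n := Nat.le_findGreatest hn (by simpa using hn)
  have h2 : 2 ^ maxM n - 1 ≤ n := Nat.findGreatest_spec (P := fun ℓ => 2 ^ ℓ - 1 ≤ n) hn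
    (by simpa using hn)
  refine ⟨h1, h2, ?_⟩
  by_contra hc
  push_neg at hc
  have hP : 2 ^ (maxM n + 1) - 1 ≤ n := hc
  have hle : maxM n + 1 ≤ n := le_trans (by have := lt_two_pow' (maxM n + 1); omega) hP
  have := Nat.le_findGreatest (P := fun ℓ => 2 ^ ℓ - 1 ≤ n) hle hP
  exact absurd this (by unfold maxM; omega)

lemma maxM_lt_of_lt {n ℓ : ℕ} (h : n < 2 ^ ℓ - 1) : maxM n < ℓ := by
  rcases Nat.eq_zero_or_pos n with h0 | hpos
  · subst h0
    have : 1 ≤ ℓ := by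
      by_contra hc
      interval_cases ℓ <;> omega
    simp only [maxM, Nat.findGreatest_zero]; omega
  · obtain ⟨_, h2, _⟩ := maxM_spec n hpos
    by_contra hc
    push_neg at hc
    have : 2 ^ ℓ ≤ 2 ^ maxM n := Nat.pow_le_pow_right (by norm_num) hc
    omega

/-! ### Mdig lemmas -/

lemma Mdig_zero (i : ℕ) : Mdig 0 i = 0 := by rw [Mdig]; simp

lemma Mdig_of_double {n : ℕ} (hn : n ≠ 0) (h : n - (2 ^ maxM n - 1) = 2 ^ maxM n - 1)
    (i : ℕ) : Mdig n i = if i = maxM n then 2 else 0 := by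
  rw [Mdig]; simp only [hn, dif_neg, if_pos h, reduceDIte]

lemma Mdig_of_single {n : ℕ} (hn : n ≠ 0) (h : n - (2 ^ maxM n - 1) ≠ 2 ^ maxM n - 1)
    (i : ℕ) :
    Mdig n i = (if i = maxM n then 1 else 0) + Mdig (n - (2 ^ maxM n - 1)) i := by
  rw [Mdig]; simp only [hn, dif_neg, if_neg h, reduceDIte]

lemma Mdig_eq_zero {n i : ℕ} (h : maxM n < i) : Mdig n i = 0 := by
  induction n using Nat.strong_induction_on with
  | _ n ih =>
    by_cases hn : n = 0
    · subst hn; exact Mdig_zero i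
    · have hpos : 1 ≤ n := Nat.one_le_iff_ne_zero.mpr hn
      obtain ⟨h1, h2, h3⟩ := maxM_spec n hpos
      by_cases hr : n - (2 ^ maxM n - 1) = 2 ^ maxM n - 1
      · rw [Mdig_of_double hn hr, if_neg (by omega)]
      · rw [Mdig_of_single hn hr, if_neg (by omega), zero_add]
        have h2p : 2 ≤ 2 ^ maxM n := by
          calc (2 : ℕ) = 2 ^ 1 := rfl
          _ ≤ 2 ^ maxM n := Nat.pow_le_pow_right (by norm_num) h1
        exact ih _ (by omega)
          (lt_of_le_of_lt (maxM_mono (Nat.sub_le _ _)) h)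

/-! ### sigmaM and reduce case lemmas -/

lemma sigmaM_zero : sigmaM 0 = 0 := by simp [sigmaM]

lemma reduce_zero : reduce 0 = 0 := by simp [reduce]

lemma sigmaM_double {n : ℕ} (hn : 1 ≤ n) (h : n - (2 ^ maxM n - 1) = 2 ^ maxM n - 1) :
    sigmaM n = 2 := by
  obtain ⟨h1, h2, h3⟩ := maxM_spec n hn
  unfold sigmaM
  rw [Finset.sum_congr rfl (fun i _ => Mdig_of_double (by omega) h i)]
  rw [Finset.sum_ite_eq' (Finset.Icc 1 n) (maxM n) (fun _ => 2)]
  rw [if_pos (Finset.mem_Icc.mpr ⟨h1, maxM_le n⟩)]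

lemma sigmaM_single {n : ℕ} (hn : 1 ≤ n) (h : n - (2 ^ maxM n - 1) ≠ 2 ^ maxM n - 1) :
    sigmaM n = 1 + sigmaM (n - (2 ^ maxM n - 1)) := by
  obtain ⟨h1, h2, h3⟩ := maxM_spec n hn
  unfold sigmaM
  rw [Finset.sum_congr rfl (fun i _ => Mdig_of_single (by omega) h i)]
  rw [Finset.sum_add_distrib]
  congr 1
  · rw [Finset.sum_ite_eq' (Finset.Icc 1 n) (maxM n) (fun _ => 1)]
    rw [if_pos (Finset.mem_Icc.mpr ⟨h1, maxM_le n⟩)]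
  · set r := n - (2 ^ maxM n - 1) with hrdef
    refine (Finset.sum_subset (Finset.Icc_subset_Icc le_rfl (by omega)) ?_).symm
    intro i hi hni
    simp only [Finset.mem_Icc] at hi hni
    exact Mdig_eq_zero (lt_of_le_of_lt (maxM_le r) (by omega))

lemma reduce_double {n : ℕ} (hn : 1 ≤ n) (h : n - (2 ^ maxM n - 1) = 2 ^ maxM n - 1) :
    reduce n = if maxM n = 1 then 0 else 2 * (2 ^ (maxM n - 1) - 1) := by
  obtain ⟨h1, h2, h3⟩ := maxM_spec n hn
  unfold reduce
  by_cases hℓ : maxM n = 1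
  · rw [if_pos hℓ]
    refine Finset.sum_eq_zero fun i hi => ?_
    simp only [Finset.mem_Icc] at hi
    rw [Mdig_of_double (by omega) h, if_neg (by omega)]
    ring
  · rw [if_neg hℓ]
    have htr : ∀ i ∈ Finset.Icc 1 n, Mdig n (i + 1) * (2 ^ i - 1) =
        if i = maxM n - 1 then 2 * (2 ^ (maxM n - 1) - 1) else 0 := by
      intro i hi
      rw [Mdig_of_double (by omega) h]
      by_cases hie : i = maxM n - 1
      · rw [if_pos (by omega), if_pos hie, hie]
      · rw [if_neg (by omega), if_neg hie]
        ring
    rw [Finset.sum_congr rfl htr]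
    rw [Finset.sum_ite_eq' (Finset.Icc 1 n) (maxM n - 1) (fun _ => 2 * (2 ^ (maxM n - 1) - 1))]
    rw [if_pos (Finset.mem_Icc.mpr ⟨by omega, by have := maxM_le n; omega⟩)]

lemma reduce_single {n : ℕ} (hn : 1 ≤ n) (h : n - (2 ^ maxM n - 1) ≠ 2 ^ maxM n - 1) :
    reduce n = (if maxM n = 1 then 0 else 2 ^ (maxM n - 1) - 1) +
      reduce (n - (2 ^ maxM n - 1)) := by
  obtain ⟨h1, h2, h3⟩ := maxM_spec n hn
  set r := n - (2 ^ maxM n - 1) with hrdef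
  unfold reduce
  have htr : ∀ i ∈ Finset.Icc 1 n, Mdig n (i + 1) * (2 ^ i - 1) =
      (if i = maxM n - 1 ∧ maxM n ≠ 1 then 2 ^ (maxM n - 1) - 1 else 0)
        + Mdig r (i + 1) * (2 ^ i - 1) := by
    intro i hi
    simp only [Finset.mem_Icc] at hi
    rw [Mdig_of_single (by omega) h, add_mul]
    congr 1
    by_cases hie : i = maxM n - 1 ∧ maxM n ≠ 1
    · rw [if_pos (by omega), if_pos hie, hie.1, one_mul]
    · rw [if_neg (by omega), if_neg hie, zero_mul]
  rw [Finset.sum_congr rfl htr, Finset.sum_add_distrib]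
  congr 1
  · by_cases hℓ : maxM n = 1
    · rw [if_pos hℓ]
      refine Finset.sum_eq_zero fun i hi => ?_
      rw [if_neg (by simp [hℓ])]
    · rw [if_neg hℓ]
      have : ∀ i ∈ Finset.Icc 1 n,
          (if i = maxM n - 1 ∧ maxM n ≠ 1 then 2 ^ (maxM n - 1) - 1 else 0) =
          (if i = maxM n - 1 then 2 ^ (maxM n - 1) - 1 else 0) := by
        intro i _
        by_cases hie : i = maxM n - 1
        · rw [if_pos ⟨hie, hℓ⟩, if_pos hie]
        · rw [if_neg (fun hc => hie hc.1), if_neg hie]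
      rw [Finset.sum_congr rfl this]
      rw [Finset.sum_ite_eq' (Finset.Icc 1 n) (maxM n - 1) (fun _ => 2 ^ (maxM n - 1) - 1)]
      rw [if_pos (Finset.mem_Icc.mpr ⟨by omega, by have := maxM_le n; omega⟩)]
  · refine (Finset.sum_subset (Finset.Icc_subset_Icc le_rfl (by omega)) ?_).symm
    intro i hi hni
    simp only [Finset.mem_Icc] at hi hni
    rw [Mdig_eq_zero (lt_of_le_of_lt (maxM_le r) (by omega)), zero_mul]

lemma reduce_le {n : ℕ} (hn : 1 ≤ n) : reduce n ≤ 2 ^ maxM n - 2 := by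
  induction n using Nat.strong_induction_on with
  | _ n ih =>
    obtain ⟨h1, h2, h3⟩ := maxM_spec n hn
    have hpow : 2 ^ maxM n = 2 * 2 ^ (maxM n - 1) := by
      conv_lhs => rw [show maxM n = (maxM n - 1) + 1 by omega]
      ring
    have h2p : 1 ≤ 2 ^ (maxM n - 1) := Nat.one_le_two_pow
    set r := n - (2 ^ maxM n - 1) with hrdef
    by_cases hr : r = 2 ^ maxM n - 1
    · rw [reduce_double hn hr]
      split_ifs <;> omega
    · rw [reduce_single hn hr]
      simp only [← hrdef]
      by_cases hr0 : r = 0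
      · rw [hr0, reduce_zero]
        split_ifs <;> omega
      · have hrpos : 1 ≤ r := by omega
        have ihr := ih r (by omega) hrpos
        have hrlt : r < 2 ^ maxM n - 1 := by
          have hpp : 2 ^ (maxM n + 1) = 2 * 2 ^ maxM n := by ring
          omega
        have hmr : maxM r < maxM n := maxM_lt_of_lt hrlt
        have hple : 2 ^ maxM r ≤ 2 ^ (maxM n - 1) :=
          Nat.pow_le_pow_right (by norm_num) (by omega)
        split_ifs <;> omega

/-! ### Main lemma -/

lemma s_two : s 2 = 10 := by
  have h := s_succ 1
  rw [s_one] at h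
  rw [h]
  rfl

lemma main_formula : ∀ k, 1 ≤ k → s k = sigmaM k + 4 * Mdig k 1 + 2 * s (reduce k) := by
  intro k
  induction k using Nat.strong_induction_on with
  | _ k ih =>
    intro hk
    obtain ⟨h1, h2, h3⟩ := maxM_spec k hk
    have hpow : 2 ^ maxM k = 2 * 2 ^ (maxM k - 1) := by
      conv_lhs => rw [show maxM k = (maxM k - 1) + 1 by omega]
      ring
    have hpp : 2 ^ (maxM k + 1) = 2 * 2 ^ maxM k := by ring
    have h2p : 1 ≤ 2 ^ (maxM k - 1) := Nat.one_le_two_pow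
    set ℓ := maxM k with hℓdef
    set r := k - (2 ^ ℓ - 1) with hrdef
    have hr_le : r ≤ 2 ^ ℓ - 1 := by omega
    by_cases hdr : r = 2 ^ ℓ - 1
    · -- "double" case : k = 2·M_ℓ
      rw [sigmaM_double hk hdr, reduce_double hk hdr]
      simp only [← hℓdef, ← hrdef]
      have hd1 : Mdig k 1 = if 1 = ℓ then 2 else 0 := Mdig_of_double (by omega) hdr 1
      have hk_eq : k = (2 ^ ℓ - 1) + (2 ^ ℓ - 1) := by omega
      have hsk : s k = 2 * (3 * 2 ^ ℓ - 1) := by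
        rw [hk_eq, s_split h1 le_rfl, s_M ℓ h1]; omega
      by_cases hℓ1 : ℓ = 1
      · rw [if_pos hℓ1, hd1, if_pos hℓ1.symm, s_zero]
        rw [hsk, hℓ1]
        norm_num
      · rw [if_neg hℓ1, hd1, if_neg (fun hc => hℓ1 hc.symm)]
        have hsr : s (2 * (2 ^ (ℓ - 1) - 1)) = 2 * (3 * 2 ^ (ℓ - 1) - 1) := by
          rw [show 2 * (2 ^ (ℓ - 1) - 1) = (2 ^ (ℓ - 1) - 1) + (2 ^ (ℓ - 1) - 1) by omega]
          rw [s_split (by omega) le_rfl, s_M _ (by omega)]; omega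
        rw [hsr, hsk]
        omega
    · -- "single" case
      have hr_lt : r < 2 ^ ℓ - 1 := lt_of_le_of_ne hr_le hdr
      have hk_eq : k = (2 ^ ℓ - 1) + r := by omega
      rw [sigmaM_single hk hdr, reduce_single hk hdr]
      simp only [← hℓdef, ← hrdef]
      have hd1 : Mdig k 1 = (if 1 = ℓ then 1 else 0) + Mdig r 1 :=
        Mdig_of_single (by omega) hdr 1
      have hsk : s k = (3 * 2 ^ ℓ - 1) + s r := by
        rw [hk_eq, s_split h1 hr_le, s_M ℓ h1]
      by_cases hr0 : r = 0
      · have hsk0 : s k = 3 * 2 ^ ℓ - 1 := by rw [hsk, hr0, s_zero, add_zero]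
        simp only [hd1, hr0, sigmaM_zero, reduce_zero, Mdig_zero, add_zero, hsk0]
        by_cases hℓ1 : ℓ = 1
        · rw [if_pos hℓ1.symm, if_pos hℓ1, s_zero, hℓ1]
          norm_num
        · rw [if_neg (fun hc => hℓ1 hc.symm), if_neg hℓ1, mul_zero, add_zero,
            s_M _ (by omega)]
          omega
      · have hℓ2 : 2 ≤ ℓ := by
          by_contra hc
          have : ℓ = 1 := by omega
          rw [this] at hr_lt
          omega
        have ihr := ih r (by omega) (by omega)
        have hmr : maxM r < ℓ := maxM_lt_of_lt hr_lt
        have hred_le : reduce r ≤ 2 ^ maxM r - 2 := reduce_le (by omega)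
        have hple : 2 ^ maxM r ≤ 2 ^ (ℓ - 1) :=
          Nat.pow_le_pow_right (by norm_num) (by omega)
        have hred_lt : reduce r ≤ 2 ^ (ℓ - 1) - 1 := by omega
        have hsr : s ((2 ^ (ℓ - 1) - 1) + reduce r) = (3 * 2 ^ (ℓ - 1) - 1) + s (reduce r) := by
          rw [s_split (by omega) hred_lt, s_M _ (by omega)]
        have hd1' : Mdig k 1 = Mdig r 1 := by
          rw [hd1, if_neg (show ¬(1 : ℕ) = ℓ by omega), zero_add]
        rw [if_neg (show ¬ℓ = 1 by omega)]
        omega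

/-- For each positive integer `k`,
`(s(k) − σ(k))/2 − 2·ε_1(k) = s(r(k))`, where `ε_1(k)` is the first M-digit
of `k`, `σ(k)` the sum of the M-digits of `k`, and `r(k)` the reduction of `k`. -/
theorem s_reduction_formula (k : ℕ) (hk : 1 ≤ k) :
    ((s k : ℤ) - sigmaM k) / 2 - 2 * Mdig k 1 = s (reduce k) := by
  have h := main_formula k hk
  have h' : (s k : ℤ) = sigmaM k + 4 * Mdig k 1 + 2 * s (reduce k) := by exact_mod_cast h
  omega
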